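/- If a subplan S of a plan P is dominated by another subplan S' (same logical structure), then the plan P' obtained by replacing S with S' in P dominates P, assuming all operator qualities are strictly positive. -/
import Mathlib


def planQuality (P : List (ℝ × ℝ)) : ℝ := (P.map Prod.fst).prod
def planCost (P : List (ℝ × ℝ)) : ℝ := (P.map Prod.snd).sum

def Dominates (Q P : List (ℝ × ℝ)) : Prop :=
  planQuality P ≤ planQuality Q ∧ planCost Q ≤ planCost P ∧
    (planQuality P < planQuality Q ∨ planCost Q < planCost P)

/-- If a subplan `S` of the plan `P = S ++ R` is dominated by another subplan `S'`
(with the same logical structure), then `P' = S' ++ R` dominates `P`, assuming all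
operator qualities are strictly positive. -/
theorem replace_dominated_subplan
    (S S' R : List (ℝ × ℝ))
    (hS : ∀ p ∈ S, 0 < p.1) (hS' : ∀ p ∈ S', 0 < p.1) (hR : ∀ p ∈ R, 0 < p.1)
    (hdom : Dominates S' S) :
    Dominates (S' ++ R) (S ++ R) := by
  obtain ⟨hq, hc, hlt⟩ := hdom
  simp only [planCost] at hc hlt
  have hRpos : 0 < (R.map Prod.fst).prod := by
    apply List.prod_pos
    intro x hx
    obtain ⟨p, hp, rfl⟩ := List.mem_map.mp hx
    exact hR p hp
  constructor
  · simp only [planQuality, List.map_append, List.prod_append]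
    exact mul_le_mul_of_nonneg_right hq hRpos.le
  constructor
  · simp only [planCost, List.map_append, List.sum_append]
    linarith
  · rcases hlt with h | h
    · left
      simp only [planQuality, List.map_append, List.prod_append]
      exact mul_lt_mul_of_pos_right h hRpos
    · right
      simp only [planCost, List.map_append, List.sum_append]
      linarith
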